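/- Let (X,d,𝔪) be a PI space, let E ⊂ X be a set of finite perimeter, and let {E_i}_{i∈I} = 𝒞𝒞ᵉ(E) be its decomposition into essential connected components. Then for every index set J ⊂ I one has P(⋃_{i∈J} E_i, X) = Σ_{i∈J} P(E_i, X); consequently, for any disjoint index sets J₁, J₂ ⊂ I, P(⋃_{i∈J₁∪J₂} E_i, X) = P(⋃_{i∈J₁} E_i, X) + P(⋃_{i∈J₂} E_i, X). -/

import Mathlib

open MeasureTheory Metric Filter Set ENNReal NNReal Topology

/-- A curve: a rectifiable continuous map from a compact interval into `X`,
parametrized by arc length (hence `1`-Lipschitz on `[0, len]`). -/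
structure Curve (X : Type*) [MetricSpace X] where
  len : ℝ
  len_nonneg : 0 ≤ len
  toFun : ℝ → X
  lipschitzOn : LipschitzOnWith 1 toFun (Set.Icc 0 len)

namespace Curve

variable {X : Type*} [MetricSpace X]

/-- A curve is nonconstant if it attains two distinct values. -/
def IsNonconstant (γ : Curve X) : Prop :=
  ∃ s ∈ Set.Icc (0:ℝ) γ.len, ∃ t ∈ Set.Icc (0:ℝ) γ.len, γ.toFun s ≠ γ.toFun t

/-- A curve lies in a set `W`. -/
def IsIn (γ : Curve X) (W : Set X) : Prop :=
  ∀ s ∈ Set.Icc (0:ℝ) γ.len, γ.toFun s ∈ W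

end Curve

variable {X : Type*} [MetricSpace X] [MeasurableSpace X] [BorelSpace X]

/-- The curve integral `∫_γ g ds` for an arc-length parametrized curve. -/
noncomputable def curveLintegral (g : X → ℝ≥0∞) (γ : Curve X) : ℝ≥0∞ :=
  ∫⁻ s in Set.Icc (0:ℝ) γ.len, g (γ.toFun s)

/-- The upper gradient inequality `|u(x) - u(y)| ≤ ∫_γ g ds` along a curve `γ`
with endpoints `x, y`. -/
def UpperGradIneq (g : X → ℝ≥0∞) (u : X → ℝ) (γ : Curve X) : Prop :=
  ENNReal.ofReal |u (γ.toFun 0) - u (γ.toFun γ.len)| ≤ curveLintegral g γ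

/-- The 1-modulus of a family of curves. -/
noncomputable def mod1 (μ : Measure X) (Γ : Set (Curve X)) : ℝ≥0∞ :=
  ⨅ (ρ : X → ℝ≥0∞) (_ : Measurable ρ ∧ ∀ γ ∈ Γ, 1 ≤ curveLintegral ρ γ),
    ∫⁻ x, ρ x ∂μ

/-- `g` is a 1-weak upper gradient of `u` in `W`: the upper gradient inequality
holds for all nonconstant curves in `W` outside a family of 1-modulus zero. -/
def IsWeakUpperGradientOn (μ : Measure X) (g : X → ℝ≥0∞) (u : X → ℝ) (W : Set X) : Prop :=
  Measurable g ∧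
    mod1 μ {γ : Curve X | γ.IsNonconstant ∧ γ.IsIn W ∧ ¬ UpperGradIneq g u γ} = 0

/-- `g` is a (strong) upper gradient of `u` in `X`. -/
def IsUpperGradient (g : X → ℝ≥0∞) (u : X → ℝ) : Prop :=
  Measurable g ∧ ∀ γ : Curve X, γ.IsNonconstant → UpperGradIneq g u γ

/-- `∫_W g_u dμ`: the integral over `W` of the minimal 1-weak upper gradient of `u`
in `W`, equivalently the infimum of `∫_W g dμ` over all 1-weak upper gradients `g`
of `u` in `W`. -/
noncomputable def gradEnergy (μ : Measure X) (u : X → ℝ) (W : Set X) : ℝ≥0∞ :=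
  ⨅ (g : X → ℝ≥0∞) (_ : IsWeakUpperGradientOn μ g u W), ∫⁻ x in W, g x ∂μ

/-- `u` is locally Lipschitz on `W`. -/
def LocLipschitzOn (u : X → ℝ) (W : Set X) : Prop :=
  ∀ x ∈ W, ∃ K : ℝ≥0, ∃ t ∈ nhdsWithin x W, LipschitzOnWith K u t

/-- Convergence `uᵢ → v` in `L¹_loc(W)`. -/
def TendstoL1loc (μ : Measure X) (W : Set X) (u : ℕ → X → ℝ) (v : X → ℝ) : Prop :=
  ∀ W' : Set X, IsOpen W' → IsCompact (closure W') → closure W' ⊆ W →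
    Tendsto (fun i => ∫⁻ x in W', ENNReal.ofReal |u i x - v x| ∂μ) atTop (𝓝 0)

/-- The total variation `‖Dv‖(W)` of a function `v` in an open set `W`. -/
noncomputable def variationOn (μ : Measure X) (v : X → ℝ) (W : Set X) : ℝ≥0∞ :=
  ⨅ (u : ℕ → X → ℝ) (_ : (∀ i, LocLipschitzOn (u i) W) ∧ TendstoL1loc μ W u v),
    Filter.liminf (fun i => gradEnergy μ (u i) W) Filter.atTop

/-- The total variation `‖Dv‖(A)` of a function `v` in an arbitrary set `A`. -/
noncomputable def totalVar (μ : Measure X) (v : X → ℝ) (A : Set X) : ℝ≥0∞ :=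
  ⨅ (W : Set X) (_ : IsOpen W ∧ A ⊆ W), variationOn μ v W

/-- The perimeter `P(E, A) = ‖Dχ_E‖(A)`. -/
noncomputable def perimeter (μ : Measure X) (E A : Set X) : ℝ≥0∞ :=
  totalVar μ (Set.indicator E fun _ => (1 : ℝ)) A

/-- The measure `μ` is doubling. -/
def IsDoublingMeasure (μ : Measure X) : Prop :=
  ∃ C : ℝ≥0∞, 1 ≤ C ∧ ∀ (x : X) (r : ℝ), 0 < r → μ (ball x (2 * r)) ≤ C * μ (ball x r)

/-- The space supports a (1,1)-Poincaré inequality: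
`⨍_{B(x,r)} |u - u_{B(x,r)}| dμ ≤ C r ⨍_{B(x,λr)} g dμ` for every ball, every
`u ∈ L¹_loc(X)` and every upper gradient `g` of `u` (stated here multiplied
through by the measures of the two balls). -/
def SupportsPoincare (μ : Measure X) : Prop :=
  ∃ C lam : ℝ, 0 < C ∧ 1 ≤ lam ∧
    ∀ (x : X) (r : ℝ), 0 < r → ∀ (u : X → ℝ) (g : X → ℝ≥0∞),
      (∀ (y : X) (s : ℝ), IntegrableOn u (ball y s) μ) → IsUpperGradient g u →
        μ (ball x (lam * r)) *
            ∫⁻ y in ball x r, ENNReal.ofReal |u y - ⨍ z in ball x r, u z ∂μ| ∂μ ≤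
          ENNReal.ofReal (C * r) * μ (ball x r) * ∫⁻ y in ball x (lam * r), g y ∂μ

/-- `(X, d, μ)` is a PI space: complete, doubling, supporting a (1,1)-Poincaré
inequality. -/
def IsPISpace (μ : Measure X) : Prop :=
  CompleteSpace X ∧ IsDoublingMeasure μ ∧ SupportsPoincare μ

/-- A set `E` of finite perimeter is decomposable in a Borel set `D` if there is a
partition `{F, G}` of `E ∩ D` into sets of finite perimeter in `D`, both of positive
measure, with `P(E,D) = P(F,D) + P(G,D)`. -/
def IsDecomposableIn (μ : Measure X) (E D : Set X) : Prop :=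
  ∃ F G : Set X, MeasurableSet F ∧ MeasurableSet G ∧ Disjoint F G ∧ F ∪ G = E ∩ D ∧
    perimeter μ F D < ⊤ ∧ perimeter μ G D < ⊤ ∧ 0 < μ F ∧ 0 < μ G ∧
    perimeter μ E D = perimeter μ F D + perimeter μ G D

/-- `E` is indecomposable in `D`. -/
def IsIndecomposableIn (μ : Measure X) (E D : Set X) : Prop :=
  ¬ IsDecomposableIn μ E D

/-- `{F i}_{i ∈ I}` is a (finite or countable) partition of `E` into indecomposable
Borel sets of positive measure and finite perimeter whose perimeters sum to `P(E,X)`;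
this is the defining property of the essential connected components `𝒞𝒞ᵉ(E)`. -/
def IsEssentialPartition (μ : Measure X) (E : Set X) (I : Set ℕ) (F : ℕ → Set X) : Prop :=
  (∀ i ∈ I, MeasurableSet (F i)) ∧
  (∀ i ∈ I, ∀ j ∈ I, i ≠ j → Disjoint (F i) (F j)) ∧
  (⋃ i ∈ I, F i) = E ∧
  (∀ i ∈ I, 0 < μ (F i)) ∧
  (∀ i ∈ I, perimeter μ (F i) Set.univ < ⊤) ∧
  (∀ i ∈ I, IsIndecomposableIn μ (F i) Set.univ) ∧
  perimeter μ E Set.univ = ∑' i : I, perimeter μ (F i.1) Set.univ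

/-- Given a decomposition `{G i}_{i ∈ I}` of `X ∖ E` into essential connected
components, the saturation of `E`: the union of `E` and its holes, i.e. the
components of finite measure. -/
def saturationOf (μ : Measure X) (E : Set X) (I : Set ℕ) (G : ℕ → Set X) : Set X :=
  E ∪ ⋃ (i : ℕ) (_ : i ∈ I ∧ μ (G i) < ⊤), G i

/-- The measure-theoretic boundary `∂* E`: points where both `E` and its complement
have strictly positive upper density. -/
def mtBoundary (μ : Measure X) (E : Set X) : Set X :=
  {x : X |
    0 < Filter.limsup (fun r => μ (ball x r ∩ E) / μ (ball x r)) (nhdsWithin 0 (Set.Ioi 0)) ∧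
    0 < Filter.limsup (fun r => μ (ball x r \ E) / μ (ball x r)) (nhdsWithin 0 (Set.Ioi 0))}

/-- The restricted codimension-one Hausdorff content `ℋ_R`. -/
noncomputable def codimOneContent (μ : Measure X) (R : ℝ) (A : Set X) : ℝ≥0∞ :=
  ⨅ (s : Set (X × ℝ))
    (_ : s.Countable ∧ (∀ p ∈ s, 0 < p.2 ∧ p.2 ≤ R) ∧ A ⊆ ⋃ p ∈ s, ball p.1 p.2),
    ∑' p : s, μ (ball (p : X × ℝ).1 (p : X × ℝ).2) / ENNReal.ofReal (p : X × ℝ).2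

/-- The codimension-one Hausdorff measure `ℋ(A) = lim_{R → 0} ℋ_R(A)`. -/
noncomputable def codimOneHausdorff (μ : Measure X) (A : Set X) : ℝ≥0∞ :=
  ⨆ (R : ℝ) (_ : 0 < R), codimOneContent μ R A


/-! ### Auxiliary lemmas -/

section Aux

open Filter

variable {μ : Measure X}

lemma LocLipschitzOn.continuous_of_univ {u : X → ℝ} (h : LocLipschitzOn u Set.univ) :
    Continuous u := by
  rw [continuous_iff_continuousAt]
  intro x
  obtain ⟨K, t, ht, hlip⟩ := h x (Set.mem_univ x)
  rw [nhdsWithin_univ] at ht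
  exact hlip.continuousOn.continuousAt ht

lemma LocLipschitzOn.measurable_of_univ {u : X → ℝ} (h : LocLipschitzOn u Set.univ) :
    Measurable u := h.continuous_of_univ.measurable

lemma LocLipschitzOn.add' {u v : X → ℝ} {W : Set X} (hu : LocLipschitzOn u W)
    (hv : LocLipschitzOn v W) : LocLipschitzOn (fun x => u x + v x) W := by
  intro x hx
  obtain ⟨K1, t1, ht1, h1⟩ := hu x hx
  obtain ⟨K2, t2, ht2, h2⟩ := hv x hx
  exact ⟨K1 + K2, t1 ∩ t2, Filter.inter_mem ht1 ht2,
    (h1.mono Set.inter_subset_left).add (h2.mono Set.inter_subset_right)⟩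

lemma curveLintegral_mono' {ρ ρ' : X → ℝ≥0∞} (h : ∀ x, ρ x ≤ ρ' x) (γ : Curve X) :
    curveLintegral ρ γ ≤ curveLintegral ρ' γ :=
  lintegral_mono fun s => h _

lemma curveLintegral_add {g h : X → ℝ≥0∞} (hg : Measurable g) (γ : Curve X) :
    curveLintegral (fun x => g x + h x) γ = curveLintegral g γ + curveLintegral h γ := by
  unfold curveLintegral
  exact lintegral_add_left' (hg.comp_aemeasurable
    ((γ.lipschitzOn.continuousOn).aemeasurable measurableSet_Icc)) _

lemma mod1_le_lintegral {Γ : Set (Curve X)} {ρ : X → ℝ≥0∞}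
    (hm : Measurable ρ) (hadm : ∀ γ ∈ Γ, 1 ≤ curveLintegral ρ γ) :
    mod1 μ Γ ≤ ∫⁻ x, ρ x ∂μ :=
  iInf₂_le ρ ⟨hm, hadm⟩

lemma mod1_empty : mod1 μ (∅ : Set (Curve X)) = 0 := by
  refine le_antisymm ?_ (zero_le)
  have h := mod1_le_lintegral (μ := μ) (Γ := ∅) (ρ := fun _ => 0) measurable_const
    (fun γ hγ => absurd hγ (Set.notMem_empty γ))
  simpa using h

lemma mod1_mono {Γ Γ' : Set (Curve X)} (h : Γ ⊆ Γ') : mod1 μ Γ ≤ mod1 μ Γ' :=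
  le_iInf₂ fun ρ hρ => mod1_le_lintegral hρ.1 fun γ hγ => hρ.2 γ (h hγ)

lemma mod1_union_eq_zero {Γ₁ Γ₂ : Set (Curve X)} (h1 : mod1 μ Γ₁ = 0) (h2 : mod1 μ Γ₂ = 0) :
    mod1 μ (Γ₁ ∪ Γ₂) = 0 := by
  refine le_antisymm (ENNReal.le_of_forall_pos_le_add fun ε hε _ => ?_) (zero_le)
  have hc : (0:ℝ≥0∞) < (ε:ℝ≥0∞) / 2 :=
    ENNReal.div_pos (by exact_mod_cast hε.ne') (by norm_num)
  have e1 : mod1 μ Γ₁ < (ε:ℝ≥0∞) / 2 := h1 ▸ hc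
  have e2 : mod1 μ Γ₂ < (ε:ℝ≥0∞) / 2 := h2 ▸ hc
  simp only [mod1, iInf_lt_iff] at e1 e2
  obtain ⟨ρ₁, ⟨hm1, ha1⟩, hi1⟩ := e1
  obtain ⟨ρ₂, ⟨hm2, ha2⟩, hi2⟩ := e2
  have hadm : ∀ γ ∈ Γ₁ ∪ Γ₂, 1 ≤ curveLintegral (fun x => ρ₁ x + ρ₂ x) γ := by
    rintro γ (hγ | hγ)
    · exact (ha1 γ hγ).trans (curveLintegral_mono' (fun x => le_self_add) γ)
    · exact (ha2 γ hγ).trans (curveLintegral_mono' (fun x => le_add_self) γ)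
  refine le_trans (mod1_le_lintegral (ρ := fun x => ρ₁ x + ρ₂ x) (hm1.add hm2) hadm) ?_
  rw [lintegral_add_left hm1, zero_add]
  calc (∫⁻ x, ρ₁ x ∂μ) + ∫⁻ x, ρ₂ x ∂μ ≤ (ε:ℝ≥0∞)/2 + (ε:ℝ≥0∞)/2 := add_le_add hi1.le hi2.le
    _ = (ε:ℝ≥0∞) := ENNReal.add_halves _

lemma upperGradIneq_add {g h : X → ℝ≥0∞} {u v : X → ℝ} {γ : Curve X}
    (hgm : Measurable g)
    (h1 : UpperGradIneq g u γ) (h2 : UpperGradIneq h v γ) :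
    UpperGradIneq (fun x => g x + h x) (fun x => u x + v x) γ := by
  unfold UpperGradIneq at *
  rw [curveLintegral_add hgm]
  calc ENNReal.ofReal |(u (γ.toFun 0) + v (γ.toFun 0)) - (u (γ.toFun γ.len) + v (γ.toFun γ.len))|
      ≤ ENNReal.ofReal (|u (γ.toFun 0) - u (γ.toFun γ.len)| + |v (γ.toFun 0) - v (γ.toFun γ.len)|) := by
        refine ENNReal.ofReal_le_ofReal ?_
        have e : (u (γ.toFun 0) + v (γ.toFun 0)) - (u (γ.toFun γ.len) + v (γ.toFun γ.len)) =
            (u (γ.toFun 0) - u (γ.toFun γ.len)) + (v (γ.toFun 0) - v (γ.toFun γ.len)) := by ring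
        rw [e]
        exact abs_add_le _ _
    _ = ENNReal.ofReal |u (γ.toFun 0) - u (γ.toFun γ.len)| +
          ENNReal.ofReal |v (γ.toFun 0) - v (γ.toFun γ.len)| :=
        ENNReal.ofReal_add (abs_nonneg _) (abs_nonneg _)
    _ ≤ _ := add_le_add h1 h2

lemma IsWeakUpperGradientOn.add {g h : X → ℝ≥0∞} {u v : X → ℝ} {W : Set X}
    (hg : IsWeakUpperGradientOn μ g u W) (hh : IsWeakUpperGradientOn μ h v W) :
    IsWeakUpperGradientOn μ (fun x => g x + h x) (fun x => u x + v x) W := by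
  refine ⟨hg.1.add hh.1, le_antisymm ?_ (zero_le)⟩
  refine le_trans (mod1_mono ?_) (le_of_eq (mod1_union_eq_zero hg.2 hh.2))
  rintro γ ⟨hnc, hin, hbad⟩
  by_cases h1 : UpperGradIneq g u γ
  · by_cases h2 : UpperGradIneq h v γ
    · exact absurd (upperGradIneq_add hg.1 h1 h2) hbad
    · exact Or.inr ⟨hnc, hin, h2⟩
  · exact Or.inl ⟨hnc, hin, h1⟩

lemma gradEnergy_le {g : X → ℝ≥0∞} {u : X → ℝ} {W : Set X}
    (hg : IsWeakUpperGradientOn μ g u W) : gradEnergy μ u W ≤ ∫⁻ x in W, g x ∂μ :=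
  iInf₂_le g hg

lemma exists_wug_lt {u : X → ℝ} {W : Set X} {c : ℝ≥0∞} (h : gradEnergy μ u W < c) :
    ∃ g, ∃ _ : IsWeakUpperGradientOn μ g u W, ∫⁻ x in W, g x ∂μ < c := by
  simpa only [gradEnergy, iInf_lt_iff] using h

lemma gradEnergy_add_le (u v : X → ℝ) (W : Set X) :
    gradEnergy μ (fun x => u x + v x) W ≤ gradEnergy μ u W + gradEnergy μ v W := by
  refine ENNReal.le_of_forall_pos_le_add fun ε hε hfin => ?_
  have hu : gradEnergy μ u W ≠ ⊤ := (ENNReal.add_lt_top.mp hfin).1.ne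
  have hv : gradEnergy μ v W ≠ ⊤ := (ENNReal.add_lt_top.mp hfin).2.ne
  have hδ : ((ε:ℝ≥0∞) / 2) ≠ 0 :=
    (ENNReal.div_pos (by exact_mod_cast hε.ne') (by norm_num)).ne'
  obtain ⟨g, hgw, hgi⟩ := exists_wug_lt (ENNReal.lt_add_right hu hδ)
  obtain ⟨h, hhw, hhi⟩ := exists_wug_lt (ENNReal.lt_add_right hv hδ)
  refine le_trans (gradEnergy_le (hgw.add hhw)) ?_
  rw [lintegral_add_left hgw.1]
  calc (∫⁻ x in W, g x ∂μ) + ∫⁻ x in W, h x ∂μ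
      ≤ (gradEnergy μ u W + (ε:ℝ≥0∞)/2) + (gradEnergy μ v W + (ε:ℝ≥0∞)/2) :=
        add_le_add hgi.le hhi.le
    _ = gradEnergy μ u W + gradEnergy μ v W + (ε:ℝ≥0∞) := by
        rw [add_add_add_comm, ENNReal.add_halves]

lemma variationOn_le {v : X → ℝ} {W : Set X} (useq : ℕ → X → ℝ)
    (h : (∀ i, LocLipschitzOn (useq i) W) ∧ TendstoL1loc μ W useq v) :
    variationOn μ v W ≤ liminf (fun i => gradEnergy μ (useq i) W) atTop :=
  iInf₂_le useq h

lemma exists_seq_lt {v : X → ℝ} {W : Set X} {c : ℝ≥0∞} (h : variationOn μ v W < c) :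
    ∃ u : ℕ → X → ℝ, ∃ _ : (∀ i, LocLipschitzOn (u i) W) ∧ TendstoL1loc μ W u v,
      liminf (fun i => gradEnergy μ (u i) W) atTop < c := by
  simpa only [variationOn, iInf_lt_iff] using h

lemma TendstoL1loc.comp_strictMono {u : ℕ → X → ℝ} {v : X → ℝ} {W : Set X}
    (h : TendstoL1loc μ W u v) {φ : ℕ → ℕ} (hφ : StrictMono φ) :
    TendstoL1loc μ W (fun n => u (φ n)) v :=
  fun W' h1 h2 h3 => (h W' h1 h2 h3).comp hφ.tendsto_atTop

lemma lintegral_triangle {ν : Measure X} (f g h : X → ℝ)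
    (hfg : Measurable fun x => ENNReal.ofReal |f x - g x|) :
    (∫⁻ x, ENNReal.ofReal |f x - h x| ∂ν) ≤
      (∫⁻ x, ENNReal.ofReal |f x - g x| ∂ν) + ∫⁻ x, ENNReal.ofReal |g x - h x| ∂ν := by
  rw [← lintegral_add_left hfg]
  refine lintegral_mono fun x => ?_
  rw [← ENNReal.ofReal_add (abs_nonneg _) (abs_nonneg _)]
  exact ENNReal.ofReal_le_ofReal (abs_sub_le _ _ _)

lemma TendstoL1loc.add {u₁ u₂ : ℕ → X → ℝ} {v₁ v₂ : X → ℝ} {W : Set X}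
    (hm : ∀ i, Measurable (u₁ i)) (hmv : Measurable v₁)
    (h1 : TendstoL1loc μ W u₁ v₁) (h2 : TendstoL1loc μ W u₂ v₂) :
    TendstoL1loc μ W (fun i x => u₁ i x + u₂ i x) (fun x => v₁ x + v₂ x) := by
  intro W' hW' hc hsub
  have A := h1 W' hW' hc hsub
  have B := h2 W' hW' hc hsub
  have key : ∀ i, (∫⁻ x in W', ENNReal.ofReal |(u₁ i x + u₂ i x) - (v₁ x + v₂ x)| ∂μ)
      ≤ (∫⁻ x in W', ENNReal.ofReal |u₁ i x - v₁ x| ∂μ) +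
        ∫⁻ x in W', ENNReal.ofReal |u₂ i x - v₂ x| ∂μ := by
    intro i
    have tri := lintegral_triangle (ν := μ.restrict W')
      (fun x => u₁ i x + u₂ i x) (fun x => v₁ x + u₂ i x) (fun x => v₁ x + v₂ x)
      (by
        have : (fun x => ENNReal.ofReal |(u₁ i x + u₂ i x) - (v₁ x + u₂ i x)|) =
            fun x => ENNReal.ofReal |u₁ i x - v₁ x| := by
          funext x
          rw [show (u₁ i x + u₂ i x) - (v₁ x + u₂ i x) = u₁ i x - v₁ x from by ring]
        rw [this]
        exact (((hm i).sub hmv).abs).ennreal_ofReal)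
    have e1 : (fun x => ENNReal.ofReal |(u₁ i x + u₂ i x) - (v₁ x + u₂ i x)|) =
        fun x => ENNReal.ofReal |u₁ i x - v₁ x| := by
      funext x
      rw [show (u₁ i x + u₂ i x) - (v₁ x + u₂ i x) = u₁ i x - v₁ x from by ring]
    have e2 : (fun x => ENNReal.ofReal |(v₁ x + u₂ i x) - (v₁ x + v₂ x)|) =
        fun x => ENNReal.ofReal |u₂ i x - v₂ x| := by
      funext x
      rw [show (v₁ x + u₂ i x) - (v₁ x + v₂ x) = u₂ i x - v₂ x from by ring]
    calc (∫⁻ x in W', ENNReal.ofReal |(u₁ i x + u₂ i x) - (v₁ x + v₂ x)| ∂μ)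
        ≤ (∫⁻ x in W', ENNReal.ofReal |(u₁ i x + u₂ i x) - (v₁ x + u₂ i x)| ∂μ) +
          ∫⁻ x in W', ENNReal.ofReal |(v₁ x + u₂ i x) - (v₁ x + v₂ x)| ∂μ := tri
      _ = (∫⁻ x in W', ENNReal.ofReal |u₁ i x - v₁ x| ∂μ) +
          ∫⁻ x in W', ENNReal.ofReal |u₂ i x - v₂ x| ∂μ := by rw [e1, e2]
  have hAB : Tendsto (fun i => (∫⁻ x in W', ENNReal.ofReal |u₁ i x - v₁ x| ∂μ) +
      ∫⁻ x in W', ENNReal.ofReal |u₂ i x - v₂ x| ∂μ) atTop (𝓝 0) := by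
    simpa using A.add B
  exact tendsto_of_tendsto_of_tendsto_of_le_of_le tendsto_const_nhds hAB
    (fun i => zero_le) key

lemma variationOn_univ_add_le {u v : X → ℝ} (hu : Measurable u) :
    variationOn μ (fun x => u x + v x) Set.univ ≤
      variationOn μ u Set.univ + variationOn μ v Set.univ := by
  refine ENNReal.le_of_forall_pos_le_add fun ε hε hfin => ?_
  have hA : variationOn μ u Set.univ ≠ ⊤ := (ENNReal.add_lt_top.mp hfin).1.ne
  have hB : variationOn μ v Set.univ ≠ ⊤ := (ENNReal.add_lt_top.mp hfin).2.ne
  have hδ : ((ε:ℝ≥0∞) / 2) ≠ 0 :=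
    (ENNReal.div_pos (by exact_mod_cast hε.ne') (by norm_num)).ne'
  obtain ⟨us, ⟨hus1, hus2⟩, hliA⟩ := exists_seq_lt (ENNReal.lt_add_right hA hδ)
  obtain ⟨vs, ⟨hvs1, hvs2⟩, hliB⟩ := exists_seq_lt (ENNReal.lt_add_right hB hδ)
  obtain ⟨σ, hσmono, hσ⟩ := extraction_of_frequently_atTop (frequently_lt_of_liminf_lt (h := hliA))
  obtain ⟨τ, hτmono, hτ⟩ := extraction_of_frequently_atTop (frequently_lt_of_liminf_lt (h := hliB))
  have hwlip : ∀ i, LocLipschitzOn (fun x => us (σ i) x + vs (τ i) x) Set.univ :=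
    fun i => (hus1 _).add' (hvs1 _)
  have hwconv : TendstoL1loc μ Set.univ (fun i x => us (σ i) x + vs (τ i) x)
      (fun x => u x + v x) :=
    TendstoL1loc.add (fun i => (hus1 (σ i)).measurable_of_univ) hu
      (hus2.comp_strictMono hσmono) (hvs2.comp_strictMono hτmono)
  refine le_trans (variationOn_le _ ⟨hwlip, hwconv⟩) ?_
  have hle : ∀ i, gradEnergy μ (fun x => us (σ i) x + vs (τ i) x) Set.univ ≤
      (variationOn μ u Set.univ + (ε:ℝ≥0∞)/2) + (variationOn μ v Set.univ + (ε:ℝ≥0∞)/2) :=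
    fun i => (gradEnergy_add_le _ _ _).trans (add_le_add (hσ i).le (hτ i).le)
  calc liminf (fun i => gradEnergy μ (fun x => us (σ i) x + vs (τ i) x) Set.univ) atTop
      ≤ (variationOn μ u Set.univ + (ε:ℝ≥0∞)/2) + (variationOn μ v Set.univ + (ε:ℝ≥0∞)/2) := by
        refine le_trans (Filter.liminf_le_liminf (Filter.Eventually.of_forall hle)) ?_
        simp [Filter.liminf_const]
    _ = variationOn μ u Set.univ + variationOn μ v Set.univ + (ε:ℝ≥0∞) := by
        rw [add_add_add_comm, ENNReal.add_halves]

lemma totalVar_univ (v : X → ℝ) : totalVar μ v Set.univ = variationOn μ v Set.univ := by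
  refine le_antisymm (iInf₂_le Set.univ ⟨isOpen_univ, subset_rfl⟩) (le_iInf₂ fun W hW => ?_)
  rw [Set.univ_subset_iff.mp hW.2]

lemma perimeter_univ (E : Set X) :
    perimeter μ E Set.univ = variationOn μ (Set.indicator E fun _ => (1 : ℝ)) Set.univ :=
  totalVar_univ _

lemma isWUG_zero (W : Set X) :
    IsWeakUpperGradientOn μ (fun _ => (0:ℝ≥0∞)) (fun _ => (0:ℝ)) W := by
  refine ⟨measurable_const, ?_⟩
  have : {γ : Curve X | γ.IsNonconstant ∧ γ.IsIn W ∧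
      ¬ UpperGradIneq (fun _ => (0:ℝ≥0∞)) (fun _ => (0:ℝ)) γ} = ∅ := by
    refine Set.eq_empty_iff_forall_notMem.mpr ?_
    rintro γ ⟨_, _, hbad⟩
    apply hbad
    unfold UpperGradIneq
    simp
  rw [this, mod1_empty]

lemma variationOn_zero_fun : variationOn μ (fun _ => (0:ℝ)) Set.univ = 0 := by
  refine le_antisymm ?_ (zero_le)
  refine le_trans (variationOn_le (fun _ _ => (0:ℝ)) ⟨?_, ?_⟩) ?_
  · intro i x _
    exact ⟨0, Set.univ, Filter.univ_mem, (LipschitzWith.const 0).lipschitzOnWith⟩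
  · intro W' _ _ _
    simpa using tendsto_const_nhds
  · have h0 : ∀ i : ℕ, gradEnergy μ (fun _ => (0:ℝ)) Set.univ ≤ 0 := by
      intro i
      refine le_trans (gradEnergy_le (isWUG_zero _)) ?_
      simp
    refine le_trans (Filter.liminf_le_liminf (Filter.Eventually.of_forall fun i => h0 i)) ?_
    simp [Filter.liminf_const]

lemma perimeter_empty : perimeter μ (∅ : Set X) Set.univ = 0 := by
  rw [perimeter_univ]
  have h0 : (Set.indicator (∅ : Set X) fun _ => (1:ℝ)) = fun _ => (0:ℝ) := by
    funext x; simp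
  rw [h0]
  exact variationOn_zero_fun

lemma perimeter_union_le {A B : Set X} (hA : MeasurableSet A) (hd : Disjoint A B) :
    perimeter μ (A ∪ B) Set.univ ≤ perimeter μ A Set.univ + perimeter μ B Set.univ := by
  rw [perimeter_univ, perimeter_univ, perimeter_univ, Set.indicator_union_of_disjoint hd]
  exact variationOn_univ_add_le (measurable_const.indicator hA)

lemma perimeter_finset_biUnion_le (F : ℕ → Set X) (s : Finset ℕ) :
    (∀ i ∈ s, MeasurableSet (F i)) →
    (∀ i ∈ s, ∀ j ∈ s, i ≠ j → Disjoint (F i) (F j)) →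
    perimeter μ (⋃ i ∈ s, F i) Set.univ ≤ ∑ i ∈ s, perimeter μ (F i) Set.univ := by
  classical
  induction s using Finset.induction_on with
  | empty =>
    intro _ _
    simp only [Finset.notMem_empty, Set.iUnion_of_empty, Set.iUnion_empty, Finset.sum_empty]
    exact le_of_eq perimeter_empty
  | @insert a s ha ih =>
    intro hm hd
    rw [Finset.set_biUnion_insert, Finset.sum_insert ha]
    have hdisj : Disjoint (F a) (⋃ i ∈ s, F i) := by
      rw [Set.disjoint_iUnion₂_right]
      intro i hi
      exact hd a (Finset.mem_insert_self a s) i (Finset.mem_insert_of_mem hi)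
        (fun h => ha (h ▸ hi))
    refine le_trans (perimeter_union_le (hm a (Finset.mem_insert_self a s)) hdisj) ?_
    exact add_le_add le_rfl (ih (fun i hi => hm i (Finset.mem_insert_of_mem hi))
      (fun i hi j hj hij => hd i (Finset.mem_insert_of_mem hi) j (Finset.mem_insert_of_mem hj) hij))

lemma variationOn_univ_le_liminf [ProperSpace X] [Nonempty X]
    (v : ℕ → X → ℝ) (hv : ∀ n, Measurable (v n)) (w : X → ℝ)
    (hconv : TendstoL1loc μ Set.univ v w) :
    variationOn μ w Set.univ ≤ liminf (fun n => variationOn μ (v n) Set.univ) atTop := by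
  set L := liminf (fun n => variationOn μ (v n) Set.univ) atTop with hLdef
  refine ENNReal.le_of_forall_pos_le_add fun ε hε hfin => ?_
  have hL : L ≠ ⊤ := hfin.ne
  have hεE : ((ε:ℝ≥0∞)) ≠ 0 := by exact_mod_cast hε.ne'
  obtain ⟨φ, hφ, hφlt⟩ := extraction_of_frequently_atTop
    (frequently_lt_of_liminf_lt (h := ENNReal.lt_add_right hL hεE))
  have x₀ : X := Classical.arbitrary X
  have hballcpt : ∀ n : ℕ, IsCompact (closure (ball x₀ ((n:ℝ) + 1))) := fun n =>
    (isCompact_closedBall x₀ _).of_isClosed_subset isClosed_closure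
      Metric.closure_ball_subset_closedBall
  have hchoice : ∀ n : ℕ, ∃ f : X → ℝ, LocLipschitzOn f Set.univ ∧
      gradEnergy μ f Set.univ < L + (ε:ℝ≥0∞) ∧
      (∫⁻ x in ball x₀ ((n:ℝ)+1), ENNReal.ofReal |f x - v (φ n) x| ∂μ) < (2:ℝ≥0∞)⁻¹ ^ n := by
    intro n
    obtain ⟨us, ⟨h1, h2⟩, h3⟩ := exists_seq_lt (hφlt n)
    have hfr : ∃ᶠ i in atTop, gradEnergy μ (us i) Set.univ < L + (ε:ℝ≥0∞) :=
      frequently_lt_of_liminf_lt (h := h3)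
    have hev : ∀ᶠ i in atTop,
        (∫⁻ x in ball x₀ ((n:ℝ)+1), ENNReal.ofReal |us i x - v (φ n) x| ∂μ) < (2:ℝ≥0∞)⁻¹ ^ n := by
      have hb := h2 (ball x₀ ((n:ℝ)+1)) isOpen_ball (hballcpt n) (Set.subset_univ _)
      refine hb.eventually_lt_const ?_
      exact ENNReal.pow_pos (by norm_num) n
    obtain ⟨i, hi1, hi2⟩ := (hfr.and_eventually hev).exists
    exact ⟨us i, h1 i, hi1, hi2⟩
  choose ws hws1 hws2 hws3 using hchoice
  have hconv' : TendstoL1loc μ Set.univ ws w := by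
    intro W' hW' hWc hWs
    obtain ⟨R, hR⟩ := hWc.isBounded.subset_ball x₀
    obtain ⟨N, hN⟩ := exists_nat_ge R
    have hsub : ∀ n : ℕ, N ≤ n → W' ⊆ ball x₀ ((n:ℝ)+1) := by
      intro n hn
      refine (subset_closure.trans hR).trans (ball_subset_ball ?_)
      have : (N:ℝ) ≤ n := by exact_mod_cast hn
      linarith
    have hBφ : Tendsto (fun n => ∫⁻ x in W', ENNReal.ofReal |v (φ n) x - w x| ∂μ)
        atTop (𝓝 0) := (hconv W' hW' hWc hWs).comp hφ.tendsto_atTop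
    have hub : Tendsto (fun n => (2:ℝ≥0∞)⁻¹ ^ n +
        ∫⁻ x in W', ENNReal.ofReal |v (φ n) x - w x| ∂μ) atTop (𝓝 0) := by
      have hp : Tendsto (fun n : ℕ => (2:ℝ≥0∞)⁻¹ ^ n) atTop (𝓝 0) :=
        ENNReal.tendsto_pow_atTop_nhds_zero_of_lt_one (by norm_num)
      simpa using hp.add hBφ
    refine tendsto_of_tendsto_of_tendsto_of_le_of_le' tendsto_const_nhds hub
      (Filter.Eventually.of_forall fun n => zero_le) ?_
    filter_upwards [eventually_ge_atTop N] with n hn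
    have tri := lintegral_triangle (ν := μ.restrict W') (ws n) (v (φ n)) w
      ((((hws1 n).measurable_of_univ.sub (hv (φ n))).abs).ennreal_ofReal)
    refine tri.trans (add_le_add ?_ le_rfl)
    exact le_trans (lintegral_mono_set (hsub n hn)) (hws3 n).le
  refine le_trans (variationOn_le ws ⟨hws1, hconv'⟩) ?_
  refine le_trans (Filter.liminf_le_liminf
    (Filter.Eventually.of_forall fun n => (hws2 n).le)) ?_
  simp [Filter.liminf_const]

lemma tsum_set_union_disjoint {J K : Set ℕ} (h : Disjoint J K) (f : ℕ → ℝ≥0∞) :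
    ∑' i : ↥(J ∪ K), f i = (∑' i : J, f i) + ∑' i : K, f i := by
  rw [tsum_subtype, tsum_subtype, tsum_subtype, Set.indicator_union_of_disjoint h]
  simpa [Pi.add_apply] using ENNReal.tsum_add (f := J.indicator f) (g := K.indicator f)

lemma tsum_set_mono_subset {J K : Set ℕ} (h : J ⊆ K) (f : ℕ → ℝ≥0∞) :
    (∑' i : J, f i) ≤ ∑' i : K, f i := by
  rw [tsum_subtype, tsum_subtype]
  exact ENNReal.tsum_le_tsum fun i =>
    Set.indicator_le_indicator_of_subset h (fun _ => zero_le) i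

lemma perimeter_biUnion_le [ProperSpace X] [Nonempty X]
    (hball : ∀ (x : X) (r : ℝ), 0 < r → 0 < μ (ball x r) ∧ μ (ball x r) < ⊤)
    (F : ℕ → Set X) (J : Set ℕ)
    (hm : ∀ i ∈ J, MeasurableSet (F i))
    (hd : ∀ i ∈ J, ∀ j ∈ J, i ≠ j → Disjoint (F i) (F j)) :
    perimeter μ (⋃ i ∈ J, F i) Set.univ ≤ ∑' i : J, perimeter μ (F i) Set.univ := by
  classical
  set U := ⋃ i ∈ J, F i with hUdef
  have hUm : MeasurableSet U :=
    MeasurableSet.biUnion (Set.to_countable J) hm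
  set s : ℕ → Finset ℕ := fun N => (Finset.range N).filter (· ∈ J) with hsdef
  set S : ℕ → Set X := fun N => ⋃ i ∈ s N, F i with hSdef
  have hmemJ : ∀ {N i}, i ∈ s N → i ∈ J := fun {N i} hi => (Finset.mem_filter.mp hi).2
  have hSU : ∀ N, S N ⊆ U := by
    intro N
    refine Set.iUnion₂_subset fun i hi => ?_
    exact Set.subset_biUnion_of_mem (hmemJ hi)
  have hSm : ∀ N, MeasurableSet (S N) := fun N =>
    MeasurableSet.biUnion ((s N).countable_toSet) fun i hi => hm i (hmemJ hi)
  have hPS : ∀ N, perimeter μ (S N) Set.univ ≤ ∑' i : J, perimeter μ (F i) Set.univ := by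
    intro N
    refine le_trans (perimeter_finset_biUnion_le F (s N)
      (fun i hi => hm i (hmemJ hi))
      (fun i hi j hj hij => hd i (hmemJ hi) j (hmemJ hj) hij)) ?_
    refine le_trans ?_ (le_of_eq (tsum_subtype J (fun i => perimeter μ (F i) Set.univ)).symm)
    calc ∑ i ∈ s N, perimeter μ (F i) Set.univ
        = ∑ i ∈ s N, J.indicator (fun i => perimeter μ (F i) Set.univ) i :=
          Finset.sum_congr rfl fun i hi =>
            (Set.indicator_of_mem (hmemJ hi) (fun i => perimeter μ (F i) Set.univ)).symm
      _ ≤ ∑' i : ℕ, J.indicator (fun i => perimeter μ (F i) Set.univ) i :=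
          ENNReal.sum_le_tsum (s N)
  have hSmono : Monotone S := by
    intro N M hNM
    refine Set.iUnion₂_mono' fun i hi => ⟨i, ?_, subset_rfl⟩
    rw [hsdef] at hi ⊢
    simp only [Finset.mem_filter, Finset.mem_range] at hi ⊢
    exact ⟨lt_of_lt_of_le hi.1 hNM, hi.2⟩
  have hconv : TendstoL1loc μ Set.univ (fun N => Set.indicator (S N) fun _ => (1:ℝ))
      (Set.indicator U fun _ => (1:ℝ)) := by
    intro W' hW' hWc hWs
    have heq : ∀ N, (∫⁻ x in W', ENNReal.ofReal
        |Set.indicator (S N) (fun _ => (1:ℝ)) x - Set.indicator U (fun _ => (1:ℝ)) x| ∂μ)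
        = μ ((U \ S N) ∩ W') := by
      intro N
      have hfun : (fun x => ENNReal.ofReal
          |Set.indicator (S N) (fun _ => (1:ℝ)) x - Set.indicator U (fun _ => (1:ℝ)) x|)
          = (U \ S N).indicator fun _ => (1:ℝ≥0∞) := by
        funext x
        by_cases hxS : x ∈ S N
        · have hxU : x ∈ U := hSU N hxS
          have hxD : x ∉ U \ S N := fun h => h.2 hxS
          simp [Set.indicator_of_mem hxS, Set.indicator_of_mem hxU,
            Set.indicator_of_notMem hxD]
        · by_cases hxU : x ∈ U
          · have hxD : x ∈ U \ S N := ⟨hxU, hxS⟩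
            simp [Set.indicator_of_notMem hxS, Set.indicator_of_mem hxU,
              Set.indicator_of_mem hxD]
          · have hxD : x ∉ U \ S N := fun h => hxU h.1
            simp [Set.indicator_of_notMem hxS, Set.indicator_of_notMem hxU,
              Set.indicator_of_notMem hxD]
      rw [hfun, lintegral_indicator (hUm.diff (hSm N)), setLIntegral_one,
        Measure.restrict_apply (hUm.diff (hSm N))]
    have hμ : Tendsto (fun N => μ ((U \ S N) ∩ W')) atTop (𝓝 0) := by
      have hanti : Antitone fun N => (U \ S N) ∩ W' := by
        intro N M hNM
        exact Set.inter_subset_inter_left W'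
          (Set.diff_subset_diff_right (hSmono hNM))
      have hnull : ∀ N, NullMeasurableSet ((U \ S N) ∩ W') μ :=
        fun N => ((hUm.diff (hSm N)).inter hW'.measurableSet).nullMeasurableSet
      have hfin' : ∃ N, μ ((U \ S N) ∩ W') ≠ ⊤ := by
        obtain ⟨R, hR⟩ := hWc.isBounded.subset_ball (Classical.arbitrary X)
        refine ⟨0, ?_⟩
        have hle : μ ((U \ S 0) ∩ W') ≤ μ (ball (Classical.arbitrary X) (max R 1)) := by
          refine measure_mono ?_
          refine (Set.inter_subset_right).trans ?_
          refine (subset_closure.trans hR).trans (ball_subset_ball (le_max_left _ _))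
        exact (lt_of_le_of_lt hle
          (hball (Classical.arbitrary X) (max R 1) (lt_of_lt_of_le one_pos (le_max_right _ _))).2).ne
      have hiInter : ⋂ N, ((U \ S N) ∩ W') = ∅ := by
        refine Set.eq_empty_iff_forall_notMem.mpr fun x hx => ?_
        have hx0 := Set.mem_iInter.mp hx 0
        have hxU : x ∈ U := hx0.1.1
        obtain ⟨i, hiJ, hxF⟩ := Set.mem_iUnion₂.mp hxU
        have hxi := Set.mem_iInter.mp hx (i + 1)
        apply hxi.1.2
        have him : i ∈ s (i + 1) := Finset.mem_filter.mpr
          ⟨Finset.mem_range.mpr (Nat.lt_succ_self i), hiJ⟩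
        exact Set.mem_biUnion him hxF
      have := tendsto_measure_iInter_atTop hnull hanti hfin'
      rw [hiInter, measure_empty] at this
      exact this
    exact hμ.congr fun N => (heq N).symm
  calc perimeter μ U Set.univ
      = variationOn μ (Set.indicator U fun _ => (1:ℝ)) Set.univ := perimeter_univ _
    _ ≤ liminf (fun N => variationOn μ (Set.indicator (S N) fun _ => (1:ℝ)) Set.univ) atTop :=
        variationOn_univ_le_liminf _ (fun N => measurable_const.indicator (hSm N)) _ hconv
    _ = liminf (fun N => perimeter μ (S N) Set.univ) atTop := by
        simp_rw [perimeter_univ]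
    _ ≤ ∑' i : J, perimeter μ (F i) Set.univ := by
        refine le_trans (Filter.liminf_le_liminf (Filter.Eventually.of_forall hPS)) ?_
        simp [Filter.liminf_const]

end Aux

/-- For the decomposition `𝒞𝒞ᵉ(E) = {E_i}_{i ∈ I}` of a set of finite perimeter
into essential connected components in a PI space, the perimeter of the union of
any subfamily equals the sum of the perimeters; consequently the perimeter is
additive over unions indexed by disjoint index sets. -/
theorem perimeter_components_subfamily
    [ProperSpace X] (μ : Measure X)
    (hball : ∀ (x : X) (r : ℝ), 0 < r → 0 < μ (ball x r) ∧ μ (ball x r) < ⊤)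
    (hPI : IsPISpace μ)
    (E : Set X) (hE : MeasurableSet E) (hEfin : perimeter μ E Set.univ < ⊤)
    (I : Set ℕ) (F : ℕ → Set X) (hpart : IsEssentialPartition μ E I F) :
    (∀ J : Set ℕ, J ⊆ I →
      perimeter μ (⋃ i ∈ J, F i) Set.univ = ∑' i : J, perimeter μ (F i.1) Set.univ) ∧
    (∀ J₁ J₂ : Set ℕ, J₁ ⊆ I → J₂ ⊆ I → Disjoint J₁ J₂ →
      perimeter μ (⋃ i ∈ J₁ ∪ J₂, F i) Set.univ =
        perimeter μ (⋃ i ∈ J₁, F i) Set.univ + perimeter μ (⋃ i ∈ J₂, F i) Set.univ) := by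
  classical
  obtain ⟨hFm, hFd, hFU, hFpos, hFfin, hFind, hFsum⟩ := hpart
  rcases isEmpty_or_nonempty X with hXe | hXne
  · -- In an empty space all components are empty, so `I = ∅`.
    have hI : I = ∅ := by
      refine Set.eq_empty_iff_forall_notMem.mpr fun i hi => ?_
      have hFe : F i = ∅ := Set.eq_empty_of_isEmpty _
      have := hFpos i hi
      rw [hFe, measure_empty] at this
      exact lt_irrefl _ this
    subst hI
    have hkey : ∀ J : Set ℕ, J ⊆ (∅ : Set ℕ) →
        perimeter μ (⋃ i ∈ J, F i) Set.univ = ∑' i : J, perimeter μ (F i.1) Set.univ := by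
      intro J hJ
      have hJe : J = ∅ := Set.subset_empty_iff.mp hJ
      subst hJe
      simp only [Set.mem_empty_iff_false, Set.iUnion_of_empty, Set.iUnion_empty]
      rw [perimeter_empty, tsum_empty]
    refine ⟨hkey, fun J₁ J₂ h1 h2 hd => ?_⟩
    rw [hkey _ (Set.union_subset h1 h2), hkey _ h1, hkey _ h2]
    exact tsum_set_union_disjoint hd fun n => perimeter μ (F n) Set.univ
  · -- Nonempty case: the real argument.
    have key : ∀ J : Set ℕ, J ⊆ I →
        perimeter μ (⋃ i ∈ J, F i) Set.univ = ∑' i : J, perimeter μ (F i.1) Set.univ := by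
      intro J hJ
      set K : Set ℕ := I \ J with hKdef
      have hKsub : K ⊆ I := Set.diff_subset
      have hdisjJK : Disjoint J K := Set.disjoint_sdiff_right
      have hJK : J ∪ K = I := Set.union_diff_cancel hJ
      have hUa : perimeter μ (⋃ i ∈ J, F i) Set.univ ≤
          ∑' i : J, perimeter μ (F i.1) Set.univ :=
        perimeter_biUnion_le hball F J (fun i hi => hFm i (hJ hi))
          (fun i hi j hj hij => hFd i (hJ hi) j (hJ hj) hij)
      have hUb : perimeter μ (⋃ i ∈ K, F i) Set.univ ≤
          ∑' i : K, perimeter μ (F i.1) Set.univ :=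
        perimeter_biUnion_le hball F K (fun i hi => hFm i (hKsub hi))
          (fun i hi j hj hij => hFd i (hKsub hi) j (hKsub hj) hij)
      have hsplit : (∑' i : ↥I, perimeter μ (F i.1) Set.univ) =
          (∑' i : J, perimeter μ (F i.1) Set.univ) +
            ∑' i : K, perimeter μ (F i.1) Set.univ := by
        rw [← hJK]
        exact tsum_set_union_disjoint hdisjJK fun n => perimeter μ (F n) Set.univ
      have hEeq : E = (⋃ i ∈ J, F i) ∪ ⋃ i ∈ K, F i := by
        rw [← hFU, ← hJK, Set.biUnion_union]
      have hdisjU : Disjoint (⋃ i ∈ J, F i) (⋃ i ∈ K, F i) := by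
        rw [Set.disjoint_iUnion₂_left]
        intro i hi
        rw [Set.disjoint_iUnion₂_right]
        intro j hj
        exact hFd i (hJ hi) j (hKsub hj) (fun h => (hdisjJK.ne_of_mem hi hj) h)
      have hsub2 : perimeter μ E Set.univ ≤
          perimeter μ (⋃ i ∈ J, F i) Set.univ + perimeter μ (⋃ i ∈ K, F i) Set.univ := by
        rw [hEeq]
        exact perimeter_union_le
          (MeasurableSet.biUnion (Set.to_countable J) fun i hi => hFm i (hJ hi)) hdisjU
      have hKfin : (∑' i : K, perimeter μ (F i.1) Set.univ) ≠ ⊤ := by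
        refine ne_top_of_le_ne_top ?_
          (tsum_set_mono_subset hKsub fun i => perimeter μ (F i) Set.univ)
        rw [← hFsum]
        exact hEfin.ne
      refine le_antisymm hUa ?_
      have h1 : (∑' i : J, perimeter μ (F i.1) Set.univ) +
          (∑' i : K, perimeter μ (F i.1) Set.univ) ≤
          perimeter μ (⋃ i ∈ J, F i) Set.univ + ∑' i : K, perimeter μ (F i.1) Set.univ := by
        calc (∑' i : J, perimeter μ (F i.1) Set.univ) +
              ∑' i : K, perimeter μ (F i.1) Set.univ
            = perimeter μ E Set.univ := by rw [← hsplit, hFsum]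
          _ ≤ perimeter μ (⋃ i ∈ J, F i) Set.univ + perimeter μ (⋃ i ∈ K, F i) Set.univ :=
              hsub2
          _ ≤ perimeter μ (⋃ i ∈ J, F i) Set.univ + ∑' i : K, perimeter μ (F i.1) Set.univ :=
              add_le_add le_rfl hUb
      exact (ENNReal.add_le_add_iff_right hKfin).mp h1
    refine ⟨key, fun J₁ J₂ h1 h2 hd => ?_⟩
    rw [key _ (Set.union_subset h1 h2), key _ h1, key _ h2]
    exact tsum_set_union_disjoint hd fun n => perimeter μ (F n) Set.univ
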